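/- Let C be a nonempty closed convex subset of a real Hilbert space H, and A, F : H → H Lipschitz continuous with constants L_A, L_F. If A is λ-strongly monotone and the couple (A,F) is γ-strongly monotone on H, then GVI(A,F,C) admits a unique solution. -/

import Mathlib

open scoped RealInnerProductSpace

section Aux

variable {H : Type*} [NormedAddCommGroup H] [InnerProductSpace ℝ H] [CompleteSpace H]

/-- Contraction estimate for `x ↦ x - t • T x` with `t = μ/L²`. -/
lemma gvi_contr_est (T : H → H) (μ L : ℝ) (hμ : 0 < μ) (hL : 0 < L) (hμL : μ ≤ L)
    (hLip : ∀ x y, ‖T x - T y‖ ≤ L * ‖x - y‖)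
    (hm : ∀ x y, ⟪T x - T y, x - y⟫ ≥ μ * ‖x - y‖ ^ 2) (x y : H) :
    ‖(x - (μ/L^2) • T x) - (y - (μ/L^2) • T y)‖ ≤ Real.sqrt (1 - (μ/L)^2) * ‖x - y‖ := by
  set t : ℝ := μ / L ^ 2 with ht
  have htpos : 0 < t := div_pos hμ (by positivity)
  have hrad : 0 ≤ 1 - (μ/L)^2 := by
    have h1 : μ / L ≤ 1 := (div_le_one hL).2 hμL
    have h2 : 0 ≤ μ / L := le_of_lt (div_pos hμ hL)
    nlinarith
  have key : ‖(x - t • T x) - (y - t • T y)‖^2 ≤ (1 - (μ/L)^2) * ‖x - y‖^2 := by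
    have h1 : (x - t • T x) - (y - t • T y) = (x - y) - t • (T x - T y) := by
      rw [smul_sub]; abel
    rw [h1, norm_sub_sq_real, real_inner_smul_right, norm_smul]
    have h2 : ⟪x - y, T x - T y⟫ ≥ μ * ‖x - y‖^2 := by
      rw [real_inner_comm]; exact hm x y
    have h3 : ‖T x - T y‖ ≤ L * ‖x - y‖ := hLip x y
    have h4 : ‖T x - T y‖^2 ≤ L^2 * ‖x - y‖^2 := by
      nlinarith [norm_nonneg (T x - T y), norm_nonneg (x - y)]
    have h5 : ‖t‖ = t := abs_of_pos htpos
    rw [h5, mul_pow]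
    have expand : (1 - (μ/L)^2) * ‖x - y‖^2
        = ‖x-y‖^2 - 2*(t*(μ*‖x-y‖^2)) + t^2 * (L^2*‖x-y‖^2) := by
      rw [ht]; field_simp; ring
    rw [expand]
    have b1 : t * (μ * ‖x-y‖^2) ≤ t * ⟪x - y, T x - T y⟫ :=
      mul_le_mul_of_nonneg_left h2 htpos.le
    have b2 : t^2 * ‖T x - T y‖^2 ≤ t^2 * (L^2 * ‖x-y‖^2) :=
      mul_le_mul_of_nonneg_left h4 (sq_nonneg t)
    linarith
  calc ‖(x - t • T x) - (y - t • T y)‖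
      = Real.sqrt (‖(x - t • T x) - (y - t • T y)‖^2) := (Real.sqrt_sq (norm_nonneg _)).symm
    _ ≤ Real.sqrt ((1 - (μ/L)^2) * ‖x - y‖^2) := Real.sqrt_le_sqrt key
    _ = Real.sqrt (1 - (μ/L)^2) * ‖x - y‖ := by
        rw [Real.sqrt_mul hrad, Real.sqrt_sq (norm_nonneg _)]

lemma gvi_k_lt_one (μ L : ℝ) (hμ : 0 < μ) (hL : 0 < L) : Real.sqrt (1 - (μ/L)^2) < 1 := by
  have h : 1 - (μ/L)^2 < 1 := by
    have : 0 < (μ/L)^2 := by positivity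
    linarith
  calc Real.sqrt (1 - (μ/L)^2) < Real.sqrt 1 := by
        rcases le_or_gt (1 - (μ/L)^2) 0 with h0 | h0
        · rw [Real.sqrt_eq_zero'.2 h0]; simp [Real.sqrt_one]
        · exact Real.sqrt_lt_sqrt h0.le h
    _ = 1 := Real.sqrt_one

/-- A Lipschitz strongly monotone operator is bijective. -/
lemma gvi_bijective (T : H → H) (μ L : ℝ) (hμ : 0 < μ) (hL : 0 < L) (hμL : μ ≤ L)
    (hLip : ∀ x y, ‖T x - T y‖ ≤ L * ‖x - y‖)
    (hm : ∀ x y, ⟪T x - T y, x - y⟫ ≥ μ * ‖x - y‖ ^ 2) :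
    Function.Bijective T := by
  constructor
  · intro x y hxy
    have := hm x y
    rw [hxy, sub_self, inner_zero_left] at this
    have h0 : ‖x - y‖ ^ 2 ≤ 0 := by nlinarith
    have : ‖x - y‖ = 0 := by nlinarith [sq_nonneg ‖x - y‖, norm_nonneg (x - y)]
    rwa [norm_sub_eq_zero_iff] at this
  · intro z
    set t : ℝ := μ / L ^ 2 with ht
    have htpos : 0 < t := div_pos hμ (by positivity)
    set k : ℝ := Real.sqrt (1 - (μ/L)^2) with hk
    have hk0 : 0 ≤ k := Real.sqrt_nonneg _
    have hk1 : k < 1 := gvi_k_lt_one μ L hμ hL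
    set Φ : H → H := fun x => x - t • T x + t • z with hΦ
    have hlip : LipschitzWith (Real.toNNReal k) Φ := by
      apply LipschitzWith.of_dist_le_mul
      intro x y
      rw [dist_eq_norm, dist_eq_norm]
      have : Φ x - Φ y = (x - t • T x) - (y - t • T y) := by simp only [hΦ]; abel
      rw [this, Real.coe_toNNReal k hk0]
      exact gvi_contr_est T μ L hμ hL hμL hLip hm x y
    have hcontr : ContractingWith (Real.toNNReal k) Φ :=
      ⟨by simpa using Real.toNNReal_lt_one.2 hk1, hlip⟩
    haveI : Nonempty H := ⟨0⟩
    refine ⟨hcontr.fixedPoint Φ, ?_⟩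
    have hfix := hcontr.fixedPoint_isFixedPt
    have : hcontr.fixedPoint Φ - t • T (hcontr.fixedPoint Φ) + t • z = hcontr.fixedPoint Φ := hfix
    have h2 : t • T (hcontr.fixedPoint Φ) = t • z := by
      have h := sub_eq_zero_of_eq this
      rw [show hcontr.fixedPoint Φ - t • T (hcontr.fixedPoint Φ) + t • z
          - hcontr.fixedPoint Φ = t • z - t • T (hcontr.fixedPoint Φ) from by abel] at h
      exact (sub_eq_zero.mp h).symm
    exact smul_right_injective H (ne_of_gt htpos) h2

/-- μ ≤ L in a nontrivial space. -/
lemma gvi_mu_le_L [Nontrivial H] (T : H → H) (μ L : ℝ)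
    (hLip : ∀ x y, ‖T x - T y‖ ≤ L * ‖x - y‖)
    (hm : ∀ x y, ⟪T x - T y, x - y⟫ ≥ μ * ‖x - y‖ ^ 2) : μ ≤ L := by
  obtain ⟨x, hx⟩ := exists_ne (0 : H)
  have h1 := hm x 0
  have h2 := hLip x 0
  have h3 : ⟪T x - T 0, x - 0⟫ ≤ ‖T x - T 0‖ * ‖x - 0‖ := real_inner_le_norm _ _
  have hxpos : 0 < ‖x - 0‖ := by simpa [sub_zero] using norm_pos_iff.2 hx
  nlinarith [mul_le_mul_of_nonneg_right h2 (norm_nonneg (x - 0)), mul_pos hxpos hxpos, sq_nonneg ‖x - 0‖]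

/-- Projection onto a closed convex nonempty set: existence with characterization. -/
lemma gvi_proj (C : Set H) (hC : C.Nonempty) (hCc : IsClosed C) (hCconv : Convex ℝ C) (w : H) :
    ∃ p ∈ C, ∀ y ∈ C, ⟪w - p, y - p⟫ ≤ 0 := by
  obtain ⟨p, hpC, hp⟩ := exists_norm_eq_iInf_of_complete_convex hC (hCc.isComplete) hCconv w
  exact ⟨p, hpC, (norm_eq_iInf_iff_real_inner_le_zero hCconv hpC).1 hp⟩

/-- Classical VI: unique solution for a Lipschitz strongly monotone operator. -/
lemma gvi_vi (C : Set H) (hC : C.Nonempty) (hCc : IsClosed C) (hCconv : Convex ℝ C)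
    (G : H → H) (μ L : ℝ) (hμ : 0 < μ) (hL : 0 < L) (hμL : μ ≤ L)
    (hLip : ∀ x y, ‖G x - G y‖ ≤ L * ‖x - y‖)
    (hm : ∀ x y, ⟪G x - G y, x - y⟫ ≥ μ * ‖x - y‖ ^ 2) :
    ∃! w : H, w ∈ C ∧ ∀ y ∈ C, ⟪G w, y - w⟫ ≥ 0 := by
  classical
  set t : ℝ := μ / L ^ 2 with ht
  have htpos : 0 < t := div_pos hμ (by positivity)
  set k : ℝ := Real.sqrt (1 - (μ/L)^2) with hk
  have hk0 : 0 ≤ k := Real.sqrt_nonneg _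
  have hk1 : k < 1 := gvi_k_lt_one μ L hμ hL
  -- projection map
  choose proj hprojC hproj using gvi_proj C hC hCc hCconv
  -- proj is nonexpansive
  have hne : ∀ u v, ‖proj u - proj v‖ ≤ ‖u - v‖ := by
    intro u v
    have h1 := hproj u (proj v) (hprojC v)
    have h2 := hproj v (proj u) (hprojC u)
    have key : ‖proj u - proj v‖^2 ≤ ⟪u - v, proj u - proj v⟫ := by
      have e1 : ⟪u - proj u, proj v - proj u⟫ ≤ 0 := h1
      have e2 : ⟪v - proj v, proj u - proj v⟫ ≤ 0 := h2
      have : ⟪(u - v) - (proj u - proj v), proj v - proj u⟫ ≤ 0 := by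
        have : (u - v) - (proj u - proj v) = (u - proj u) - (v - proj v) := by abel
        rw [this, inner_sub_left]
        have e2' : ⟪v - proj v, proj v - proj u⟫ ≥ 0 := by
          have : proj v - proj u = -(proj u - proj v) := by abel
          rw [this, inner_neg_right]; linarith
        linarith
      have h3 : ⟪proj u - proj v, proj v - proj u⟫ = -‖proj u - proj v‖^2 := by
        have : proj v - proj u = -(proj u - proj v) := by abel
        rw [this, inner_neg_right, real_inner_self_eq_norm_sq]
      rw [inner_sub_left, h3] at this
      have h4 : ⟪u - v, proj v - proj u⟫ = -⟪u - v, proj u - proj v⟫ := by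
        have : proj v - proj u = -(proj u - proj v) := by abel
        rw [this, inner_neg_right]
      rw [h4] at this
      linarith
    have h5 : ⟪u - v, proj u - proj v⟫ ≤ ‖u - v‖ * ‖proj u - proj v‖ := real_inner_le_norm _ _
    rcases eq_or_lt_of_le (norm_nonneg (proj u - proj v)) with h0 | h0
    · rw [← h0]; exact norm_nonneg _
    · nlinarith
  set Φ : H → H := fun w => proj (w - t • G w) with hΦ
  have hlip : LipschitzWith (Real.toNNReal k) Φ := by
    apply LipschitzWith.of_dist_le_mul
    intro x y
    rw [dist_eq_norm, dist_eq_norm, Real.coe_toNNReal k hk0]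
    calc ‖Φ x - Φ y‖ ≤ ‖(x - t • G x) - (y - t • G y)‖ := hne _ _
      _ ≤ k * ‖x - y‖ := gvi_contr_est G μ L hμ hL hμL hLip hm x y
  have hcontr : ContractingWith (Real.toNNReal k) Φ :=
    ⟨by simpa using Real.toNNReal_lt_one.2 hk1, hlip⟩
  haveI : Nonempty H := ⟨0⟩
  set w : H := hcontr.fixedPoint Φ with hw
  have hfix : Φ w = w := hcontr.fixedPoint_isFixedPt
  have hwC : w ∈ C := by rw [← hfix]; exact hprojC _
  have hsol : ∀ y ∈ C, ⟪G w, y - w⟫ ≥ 0 := by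
    intro y hy
    have hfix' : proj (w - t • G w) = w := hfix
    have := hproj (w - t • G w) y hy
    rw [hfix'] at this
    have h1 : (w - t • G w) - w = -(t • G w) := by abel
    rw [h1, inner_neg_left, real_inner_smul_left] at this
    have h2 : t * ⟪G w, y - w⟫ ≥ 0 := by linarith
    nlinarith
  refine ⟨w, ⟨hwC, hsol⟩, ?_⟩
  rintro v ⟨hvC, hvsol⟩
  by_contra hne'
  have h1 := hvsol w hwC
  have h2 := hsol v hvC
  have h3 := hm v w
  have hvw : v - w ≠ 0 := sub_ne_zero.2 hne'
  have hpos : 0 < ‖v - w‖ := norm_pos_iff.2 hvw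
  have h4 : ⟪G v - G w, v - w⟫ = ⟪G v, v - w⟫ - ⟪G w, v - w⟫ := by rw [inner_sub_left]
  have h5 : ⟪G v, v - w⟫ = -⟪G v, w - v⟫ := by
    have : v - w = -(w - v) := by abel
    rw [this, inner_neg_right]
  linarith [mul_pos hμ (pow_pos hpos 2)]

end Aux

theorem stmt_5 {H : Type*} [NormedAddCommGroup H] [InnerProductSpace ℝ H]
    [CompleteSpace H]
    (C : Set H) (hC : C.Nonempty) (hCc : IsClosed C) (hCconv : Convex ℝ C)
    (A F : H → H) (LA LF lam γ : ℝ) (hLA : 0 < LA) (hLF : 0 < LF)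
    (hlam : 0 < lam) (hγ : 0 < γ)
    (hALip : LipschitzWith (Real.toNNReal LA) A)
    (hFLip : LipschitzWith (Real.toNNReal LF) F)
    (hAsm : ∀ x y : H, ⟪A x - A y, x - y⟫ ≥ lam * ‖x - y‖ ^ 2)
    (hmono : ∀ x y : H, ⟪A x - A y, F x - F y⟫ ≥ γ * ‖x - y‖ ^ 2) :
    ∃! xs : H, F xs ∈ C ∧ ∀ y ∈ C, ⟪A xs, y - F xs⟫ ≥ 0 := by
  classical
  rcases subsingleton_or_nontrivial H with hs | hs
  · obtain ⟨c, hc⟩ := hC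
    refine ⟨0, ⟨?_, ?_⟩, ?_⟩
    · have h : F 0 = c := Subsingleton.elim _ _
      rwa [h]
    · intro y hy
      have h : y - F 0 = 0 := Subsingleton.elim _ _
      rw [h, inner_zero_right]
    · intro x _
      exact Subsingleton.elim _ _
  · haveI : Nonempty H := ⟨0⟩
    have hAlip : ∀ x y, ‖A x - A y‖ ≤ LA * ‖x - y‖ := by
      intro x y
      have h := hALip.dist_le_mul x y
      rwa [dist_eq_norm, dist_eq_norm, Real.coe_toNNReal LA hLA.le] at h
    have hFlip : ∀ x y, ‖F x - F y‖ ≤ LF * ‖x - y‖ := by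
      intro x y
      have h := hFLip.dist_le_mul x y
      rwa [dist_eq_norm, dist_eq_norm, Real.coe_toNNReal LF hLF.le] at h
    have hlamLA : lam ≤ LA := gvi_mu_le_L A lam LA hAlip hAsm
    have hAbij : Function.Bijective A := gvi_bijective A lam LA hlam hLA hlamLA hAlip hAsm
    set Ainv : H → H := Function.invFun A with hAinv
    have hAleft : ∀ x, Ainv (A x) = x := fun x => Function.leftInverse_invFun hAbij.1 x
    have hAright : ∀ z, A (Ainv z) = z := fun z => Function.rightInverse_invFun hAbij.2 z
    set B : H → H := fun u => F (Ainv u) with hB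
    have hexp : ∀ x y, lam * ‖x - y‖ ≤ ‖A x - A y‖ := by
      intro x y
      rcases eq_or_ne x y with rfl | hxy
      · simp
      · have h1 := hAsm x y
        have h2 : ⟪A x - A y, x - y⟫ ≤ ‖A x - A y‖ * ‖x - y‖ := real_inner_le_norm _ _
        have hp : 0 < ‖x - y‖ := norm_pos_iff.2 (sub_ne_zero.2 hxy)
        nlinarith
    set LB : ℝ := LF / lam with hLB
    set μB : ℝ := γ / LA ^ 2 with hμB
    have hLBpos : 0 < LB := div_pos hLF hlam
    have hμBpos : 0 < μB := div_pos hγ (by positivity)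
    have hBlip : ∀ u v, ‖B u - B v‖ ≤ LB * ‖u - v‖ := by
      intro u v
      have h1 : ‖F (Ainv u) - F (Ainv v)‖ ≤ LF * ‖Ainv u - Ainv v‖ := hFlip _ _
      have h2 : lam * ‖Ainv u - Ainv v‖ ≤ ‖u - v‖ := by
        have h := hexp (Ainv u) (Ainv v)
        rwa [hAright, hAright] at h
      calc ‖B u - B v‖ ≤ LF * ‖Ainv u - Ainv v‖ := h1
        _ ≤ LB * ‖u - v‖ := by
            rw [hLB, div_mul_eq_mul_div, le_div_iff₀ hlam]
            nlinarith [mul_le_mul_of_nonneg_left h2 hLF.le]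
    have hBmono : ∀ u v, ⟪B u - B v, u - v⟫ ≥ μB * ‖u - v‖ ^ 2 := by
      intro u v
      have e1 : u - v = A (Ainv u) - A (Ainv v) := by rw [hAright, hAright]
      have key : ⟪B u - B v, u - v⟫ = ⟪A (Ainv u) - A (Ainv v), F (Ainv u) - F (Ainv v)⟫ := by
        rw [real_inner_comm]
        exact congrArg₂ (fun a b => (inner ℝ a b : ℝ)) e1 rfl
      rw [key]
      have h1 := hmono (Ainv u) (Ainv v)
      have h2 : ‖u - v‖ ≤ LA * ‖Ainv u - Ainv v‖ := by
        have h := hAlip (Ainv u) (Ainv v)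
        rwa [hAright, hAright] at h
      have hμBe : μB * LA ^ 2 = γ := by rw [hμB]; field_simp
      have hsq : ‖u - v‖ ^ 2 ≤ LA ^ 2 * ‖Ainv u - Ainv v‖ ^ 2 := by
        nlinarith [norm_nonneg (u - v), norm_nonneg (Ainv u - Ainv v)]
      have h4 := mul_le_mul_of_nonneg_left hsq hμBpos.le
      have h5 : μB * (LA ^ 2 * ‖Ainv u - Ainv v‖ ^ 2) = γ * ‖Ainv u - Ainv v‖ ^ 2 := by
        rw [← hμBe]; ring
      linarith
    have hμBLB : μB ≤ LB := gvi_mu_le_L B μB LB hBlip hBmono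
    have hBbij : Function.Bijective B := gvi_bijective B μB LB hμBpos hLBpos hμBLB hBlip hBmono
    set G : H → H := Function.invFun B with hG
    have hBleft : ∀ u, G (B u) = u := fun u => Function.leftInverse_invFun hBbij.1 u
    have hBright : ∀ w, B (G w) = w := fun w => Function.rightInverse_invFun hBbij.2 w
    set LG : ℝ := 1 / μB with hLG
    set μG : ℝ := μB / LB ^ 2 with hμG
    have hLGpos : 0 < LG := by positivity
    have hμGpos : 0 < μG := by positivity
    have hexpB : ∀ u v, μB * ‖u - v‖ ≤ ‖B u - B v‖ := by
      intro u v
      rcases eq_or_ne u v with rfl | huv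
      · simp
      · have h1 := hBmono u v
        have h2 : ⟪B u - B v, u - v⟫ ≤ ‖B u - B v‖ * ‖u - v‖ := real_inner_le_norm _ _
        have hp : 0 < ‖u - v‖ := norm_pos_iff.2 (sub_ne_zero.2 huv)
        nlinarith
    have hGlip : ∀ w v, ‖G w - G v‖ ≤ LG * ‖w - v‖ := by
      intro w v
      have h2 : μB * ‖G w - G v‖ ≤ ‖w - v‖ := by
        have h := hexpB (G w) (G v)
        rwa [hBright, hBright] at h
      rw [hLG, div_mul_eq_mul_div, le_div_iff₀ hμBpos]
      nlinarith
    have hGmono : ∀ w v, ⟪G w - G v, w - v⟫ ≥ μG * ‖w - v‖ ^ 2 := by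
      intro w v
      have e1 : w - v = B (G w) - B (G v) := by rw [hBright, hBright]
      have key : ⟪G w - G v, w - v⟫ = ⟪B (G w) - B (G v), G w - G v⟫ := by
        rw [real_inner_comm]
        exact congrArg₂ (fun a b => (inner ℝ a b : ℝ)) e1 rfl
      rw [key]
      have h1 := hBmono (G w) (G v)
      have h2 : ‖w - v‖ ≤ LB * ‖G w - G v‖ := by
        have h := hBlip (G w) (G v)
        rwa [hBright, hBright] at h
      have hμGe : μG * LB ^ 2 = μB := by rw [hμG]; field_simp
      have hsq : ‖w - v‖ ^ 2 ≤ LB ^ 2 * ‖G w - G v‖ ^ 2 := by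
        nlinarith [norm_nonneg (w - v), norm_nonneg (G w - G v)]
      have h4 := mul_le_mul_of_nonneg_left hsq hμGpos.le
      have h5 : μG * (LB ^ 2 * ‖G w - G v‖ ^ 2) = μB * ‖G w - G v‖ ^ 2 := by
        rw [← hμGe]; ring
      linarith
    have hμGLG : μG ≤ LG := gvi_mu_le_L G μG LG hGlip hGmono
    obtain ⟨w, ⟨hwC, hwsol⟩, hwuniq⟩ :=
      gvi_vi C hC hCc hCconv G μG LG hμGpos hLGpos hμGLG hGlip hGmono
    refine ⟨Ainv (G w), ⟨?_, ?_⟩, ?_⟩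
    · show F (Ainv (G w)) ∈ C
      have : F (Ainv (G w)) = B (G w) := rfl
      rw [this, hBright]
      exact hwC
    · intro y hy
      have e1 : A (Ainv (G w)) = G w := hAright _
      have e2 : F (Ainv (G w)) = w := by
        have : F (Ainv (G w)) = B (G w) := rfl
        rw [this, hBright]
      rw [e1, e2]
      exact hwsol y hy
    · rintro x ⟨hxC, hxsol⟩
      have hFx : F x = B (A x) := by
        have : B (A x) = F (Ainv (A x)) := rfl
        rw [this, hAleft]
      have hxw : F x = w := by
        apply hwuniq
        refine ⟨hxC, ?_⟩
        intro y hy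
        have : G (F x) = A x := by rw [hFx, hBleft]
        rw [this]
        exact hxsol y hy
      have h1 : A x = G w := by rw [← hxw, hFx, hBleft]
      rw [← h1, hAleft]
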